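/- Let W₁, W₂, W₃ be finite-dimensional vector spaces each equipped with a non-degenerate symmetric bilinear form. If L ⊆ W₂ × W₁ is a Lagrangian subspace with respect to the form ⟨·,·⟩_{W₂} ⊕ (−⟨·,·⟩_{W₁}), and L' ⊆ W₃ × W₂ is Lagrangian with respect to ⟨·,·⟩_{W₃} ⊕ (−⟨·,·⟩_{W₂}), then the composed relation L' ∘ L ⊆ W₃ × W₁ is Lagrangian with respect to ⟨·,·⟩_{W₃} ⊕ (−⟨·,·⟩_{W₁}). -/

import Mathlib

open Module

variable {K : Type*} [Field K]

/-- Composition of linear relations: a relation `W₁ ⇢ W₂` is a subspace of `W₂ × W₁`. -/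
def LinRel.comp {V₁ V₂ V₃ : Type*}
    [AddCommGroup V₁] [Module K V₁] [AddCommGroup V₂] [Module K V₂]
    [AddCommGroup V₃] [Module K V₃]
    (R' : Submodule K (V₃ × V₂)) (R : Submodule K (V₂ × V₁)) :
    Submodule K (V₃ × V₁) where
  carrier := {p | ∃ b, (p.1, b) ∈ R' ∧ (b, p.2) ∈ R}
  add_mem' := by
    rintro x y ⟨b, hb', hb⟩ ⟨c, hc', hc⟩
    exact ⟨b + c, R'.add_mem hb' hc', R.add_mem hb hc⟩
  zero_mem' := ⟨0, R'.zero_mem, R.zero_mem⟩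
  smul_mem' := by
    rintro a x ⟨b, hb', hb⟩
    exact ⟨a • b, R'.smul_mem a hb', R.smul_mem a hb⟩

/-- The bilinear form `⟨·,·⟩_{W₂} ⊕ (−⟨·,·⟩_{W₁})` on `W₂ × W₁`. -/
def prodNegForm {W₂ W₁ : Type*} [AddCommGroup W₂] [Module K W₂]
    [AddCommGroup W₁] [Module K W₁]
    (B₂ : LinearMap.BilinForm K W₂) (B₁ : LinearMap.BilinForm K W₁) :
    LinearMap.BilinForm K (W₂ × W₁) :=
  LinearMap.mk₂ K (fun x y => B₂ x.1 y.1 - B₁ x.2 y.2)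
    (fun x x' y => by
      simp only [Prod.fst_add, Prod.snd_add, map_add, LinearMap.add_apply]; ring)
    (fun a x y => by
      simp only [Prod.smul_fst, Prod.smul_snd, map_smul, LinearMap.smul_apply,
        smul_eq_mul]; ring)
    (fun x y y' => by
      simp only [Prod.fst_add, Prod.snd_add, map_add, LinearMap.add_apply]; ring)
    (fun a x y => by
      simp only [Prod.smul_fst, Prod.smul_snd, map_smul, LinearMap.smul_apply,
        smul_eq_mul]; ring)


section Aux

open LinearMap

/-- Direct sum of two bilinear forms on a product. -/
def sumForm {A B : Type*} [AddCommGroup A] [Module K A] [AddCommGroup B] [Module K B]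
    (Ba : LinearMap.BilinForm K A) (Bb : LinearMap.BilinForm K B) :
    LinearMap.BilinForm K (A × B) :=
  LinearMap.mk₂ K (fun x y => Ba x.1 y.1 + Bb x.2 y.2)
    (fun x x' y => by
      simp only [Prod.fst_add, Prod.snd_add, map_add, LinearMap.add_apply]; ring)
    (fun a x y => by
      simp only [Prod.smul_fst, Prod.smul_snd, map_smul, LinearMap.smul_apply,
        smul_eq_mul]; ring)
    (fun x y y' => by
      simp only [Prod.fst_add, Prod.snd_add, map_add, LinearMap.add_apply]; ring)
    (fun a x y => by
      simp only [Prod.smul_fst, Prod.smul_snd, map_smul, LinearMap.smul_apply,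
        smul_eq_mul]; ring)

@[simp] lemma sumForm_apply {A B : Type*} [AddCommGroup A] [Module K A]
    [AddCommGroup B] [Module K B]
    (Ba : LinearMap.BilinForm K A) (Bb : LinearMap.BilinForm K B) (x y : A × B) :
    sumForm Ba Bb x y = Ba x.1 y.1 + Bb x.2 y.2 := rfl

@[simp] lemma prodNegForm_apply {W₂ W₁ : Type*} [AddCommGroup W₂] [Module K W₂]
    [AddCommGroup W₁] [Module K W₁]
    (B₂ : LinearMap.BilinForm K W₂) (B₁ : LinearMap.BilinForm K W₁) (x y : W₂ × W₁) :
    prodNegForm B₂ B₁ x y = B₂ x.1 y.1 - B₁ x.2 y.2 := rfl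

lemma orthogonal_sup {V : Type*} [AddCommGroup V] [Module K V]
    (B : LinearMap.BilinForm K V) (S T : Submodule K V) :
    B.orthogonal (S ⊔ T) = B.orthogonal S ⊓ B.orthogonal T := by
  ext x
  simp only [Submodule.mem_inf, LinearMap.BilinForm.mem_orthogonal_iff,
    LinearMap.BilinForm.isOrtho_def]
  constructor
  · intro h
    exact ⟨fun n hn => h n (Submodule.mem_sup_left hn),
      fun n hn => h n (Submodule.mem_sup_right hn)⟩
  · rintro ⟨hs, ht⟩ n hn
    obtain ⟨s, hsm, t, htm, rfl⟩ := Submodule.mem_sup.mp hn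
    simp [map_add, hs s hsm, ht t htm]

end Aux

/-- The composition of Lagrangian relations between finite-dimensional vector spaces
with non-degenerate symmetric bilinear forms is again a Lagrangian relation. -/
theorem lagrangian_comp {W₁ W₂ W₃ : Type*}
    [AddCommGroup W₁] [Module K W₁] [FiniteDimensional K W₁]
    [AddCommGroup W₂] [Module K W₂] [FiniteDimensional K W₂]
    [AddCommGroup W₃] [Module K W₃] [FiniteDimensional K W₃]
    (B₁ : LinearMap.BilinForm K W₁) (B₂ : LinearMap.BilinForm K W₂)
    (B₃ : LinearMap.BilinForm K W₃)
    (h₁symm : ∀ x y, B₁ x y = B₁ y x) (h₂symm : ∀ x y, B₂ x y = B₂ y x)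
    (h₃symm : ∀ x y, B₃ x y = B₃ y x)
    (h₁nd : ∀ x, (∀ y, B₁ x y = 0) → x = 0)
    (h₂nd : ∀ x, (∀ y, B₂ x y = 0) → x = 0)
    (h₃nd : ∀ x, (∀ y, B₃ x y = 0) → x = 0)
    (L : Submodule K (W₂ × W₁)) (L' : Submodule K (W₃ × W₂))
    (hL : L = (prodNegForm B₂ B₁).orthogonal L)
    (hL' : L' = (prodNegForm B₃ B₂).orthogonal L') :
    LinRel.comp L' L = (prodNegForm B₃ B₁).orthogonal (LinRel.comp L' L) := by
  classical
  set Q : LinearMap.BilinForm K ((W₃ × W₂) × (W₂ × W₁)) :=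
    sumForm (prodNegForm B₃ B₂) (prodNegForm B₂ B₁) with hQdef
  have hQ : ∀ x y, Q x y =
      B₃ x.1.1 y.1.1 - B₂ x.1.2 y.1.2 + (B₂ x.2.1 y.2.1 - B₁ x.2.2 y.2.2) := by
    intro x y; simp [hQdef]
  have hQsymm : ∀ x y, Q x y = Q y x := by
    intro x y
    rw [hQ, hQ, h₃symm x.1.1, h₂symm x.1.2, h₂symm x.2.1, h₁symm x.2.2]
  have hQrefl : Q.IsRefl := fun x y h => by rw [hQsymm]; exact h
  have hQnd : Q.Nondegenerate := by
    refine (LinearMap.IsRefl.nondegenerate_iff_separatingLeft hQrefl).mpr ?_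
    rintro ⟨⟨a, b⟩, ⟨c, d⟩⟩ hx
    have ha : a = 0 := h₃nd a fun y => by simpa [hQ] using hx ((y, 0), (0, 0))
    have hb : b = 0 := h₂nd b fun y => by
      have := hx ((0, y), (0, 0)); simp [hQ] at this; simpa using this
    have hc : c = 0 := h₂nd c fun y => by simpa [hQ] using hx ((0, 0), (y, 0))
    have hd : d = 0 := h₁nd d fun y => by
      have := hx ((0, 0), (0, y)); simp [hQ] at this; simpa using this
    simp [ha, hb, hc, hd]
  set M : Submodule K ((W₃ × W₂) × (W₂ × W₁)) := L'.prod L with hMdef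
  have hM : Q.orthogonal M = M := by
    ext x
    simp only [LinearMap.BilinForm.mem_orthogonal_iff, LinearMap.BilinForm.isOrtho_def,
      hMdef, Submodule.mem_prod]
    constructor
    · intro h
      constructor
      · rw [hL', LinearMap.BilinForm.mem_orthogonal_iff]
        intro n hn
        have := h (n, 0) ⟨hn, L.zero_mem⟩
        simpa [LinearMap.BilinForm.isOrtho_def, hQ] using this
      · rw [hL, LinearMap.BilinForm.mem_orthogonal_iff]
        intro n hn
        have := h (0, n) ⟨L'.zero_mem, hn⟩
        simpa [LinearMap.BilinForm.isOrtho_def, hQ] using this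
    · rintro ⟨h1, h2⟩ n ⟨hn1, hn2⟩
      rw [hL'] at h1; rw [hL] at h2
      have e1 := h1 n.1 hn1
      have e2 := h2 n.2 hn2
      simp only [prodNegForm_apply] at e1 e2
      rw [hQ]; rw [e1, e2]; ring
  set D : Submodule K ((W₃ × W₂) × (W₂ × W₁)) :=
    LinearMap.ker ((LinearMap.snd K W₃ W₂).comp (LinearMap.fst K (W₃ × W₂) (W₂ × W₁)) -
      (LinearMap.fst K W₂ W₁).comp (LinearMap.snd K (W₃ × W₂) (W₂ × W₁))) with hDdef
  have hDmem : ∀ x : (W₃ × W₂) × (W₂ × W₁), x ∈ D ↔ x.1.2 = x.2.1 := by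
    intro x
    simp [hDdef, LinearMap.mem_ker, sub_eq_zero]
  have hDorth : ∀ z ∈ Q.orthogonal D, z.1.1 = 0 ∧ z.2.2 = 0 ∧ z.1.2 = z.2.1 := by
    intro z hz
    rw [LinearMap.BilinForm.mem_orthogonal_iff] at hz
    have h1 : z.1.1 = 0 := h₃nd z.1.1 fun y => by
      have := hz ((y, 0), (0, 0)) (by rw [hDmem])
      rw [hQ] at this
      simp at this
      rw [h₃symm]; simpa using this
    have h2 : z.2.2 = 0 := h₁nd z.2.2 fun y => by
      have := hz ((0, 0), (0, y)) (by rw [hDmem])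
      rw [hQ] at this
      simp at this
      rw [h₁symm]; simpa using this
    have h3 : z.2.1 - z.1.2 = 0 := h₂nd _ fun y => by
      have := hz ((0, y), (y, 0)) (by rw [hDmem])
      rw [hQ] at this
      simp at this
      rw [map_sub, LinearMap.sub_apply, h₂symm z.2.1, h₂symm z.1.2]
      linear_combination this
    exact ⟨h1, h2, (sub_eq_zero.mp h3).symm⟩
  have key : Q.orthogonal (M ⊓ D) = M ⊔ Q.orthogonal D := by
    have h1 : M ⊓ D = Q.orthogonal (M ⊔ Q.orthogonal D) := by
      rw [orthogonal_sup, LinearMap.BilinForm.orthogonal_orthogonal hQnd hQrefl, hM]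
    rw [h1, LinearMap.BilinForm.orthogonal_orthogonal hQnd hQrefl]
  apply le_antisymm
  · -- isotropic
    rintro x ⟨b, hb', hb⟩
    rw [LinearMap.BilinForm.mem_orthogonal_iff]
    rintro n ⟨c, hc', hc⟩
    rw [hL'] at hb'; rw [hL] at hb
    have e1 := hb' (n.1, c) hc'
    have e2 := hb (c, n.2) hc
    simp only [prodNegForm_apply] at e1 e2
    rw [prodNegForm_apply]
    linear_combination e1 + e2
  · intro x hx
    rw [LinearMap.BilinForm.mem_orthogonal_iff] at hx
    have hxb : ((x.1, (0 : W₂)), ((0 : W₂), x.2)) ∈ Q.orthogonal (M ⊓ D) := by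
      rw [LinearMap.BilinForm.mem_orthogonal_iff]
      intro n hn
      rw [Submodule.mem_inf] at hn
      obtain ⟨hnM, hnD⟩ := hn
      rw [hDmem] at hnD
      rw [hMdef, Submodule.mem_prod] at hnM
      have hnN : (n.1.1, n.2.2) ∈ LinRel.comp L' L := by
        refine ⟨n.1.2, hnM.1, ?_⟩
        rw [hnD]; exact hnM.2
      have := hx _ hnN
      rw [prodNegForm_apply] at this
      rw [hQ]
      simp only at this ⊢
      simp only [map_zero]
      linear_combination this
    rw [key] at hxb
    obtain ⟨m, hm, z, hz, hmz⟩ := Submodule.mem_sup.mp hxb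
    obtain ⟨hz1, hz2, hz3⟩ := hDorth z hz
    have hme : m = ((x.1, -z.1.2), (-z.1.2, x.2)) := by
      have h11 : m.1.1 + z.1.1 = x.1 := congrArg (fun t => t.1.1) hmz
      have h12 : m.1.2 + z.1.2 = 0 := congrArg (fun t => t.1.2) hmz
      have h21 : m.2.1 + z.2.1 = 0 := congrArg (fun t => t.2.1) hmz
      have h22 : m.2.2 + z.2.2 = x.2 := congrArg (fun t => t.2.2) hmz
      rw [hz1, add_zero] at h11
      rw [hz2, add_zero] at h22
      rw [← hz3] at h21
      have e1 : m.1.2 = -z.1.2 := eq_neg_of_add_eq_zero_left h12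
      have e2 : m.2.1 = -z.1.2 := eq_neg_of_add_eq_zero_left h21
      exact Prod.ext (Prod.ext h11 e1) (Prod.ext e2 h22)
    rw [hme] at hm
    obtain ⟨hm1, hm2⟩ := Submodule.mem_prod.mp hm
    exact ⟨-z.1.2, hm1, hm2⟩
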